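/- Consider the 3-block ADMM iterates (eq. finalupdate): S^{(t+1)} = (H+ρ_t I)^{-1}(H(W − L^{(t)}) − V^{(t)} + ρ_t D^{(t)}), L^{(t+1)} = H^{-1/2}P_r(H^{1/2}(W − S^{(t+1)})), D^{(t+1)} = P_S(S^{(t+1)} + V^{(t)}/ρ_t), V^{(t+1)} = V^{(t)} + ρ_t(S^{(t+1)} − D^{(t+1)}), with H = XᵀX + λI, λ > 0, nondecreasing ρ_t > 0. Let C_F ≥ 1 bound ‖H^{-1/2}‖₂, ‖H‖₂, and ‖HW‖_F. Then for all t ≥ 1, ‖L^{(t)}‖_F ≤ C_F³ (1 + ‖D^{(t)}‖_F + ‖V^{(t)}‖_F/ρ_{t-1} + ‖V^{(t-1)}‖_F/ρ_{t-1}). -/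

import Mathlib

open Matrix

noncomputable def frobNorm {n m : ℕ} (A : Matrix (Fin n) (Fin m) ℝ) : ℝ :=
  Real.sqrt (∑ i, ∑ j, (A i j) ^ 2)

/-- The spectral (ℓ₂ operator) norm of a square real matrix. -/
noncomputable def specNorm {n : ℕ} (A : Matrix (Fin n) (Fin n) ℝ) : ℝ :=
  ‖LinearMap.toContinuousLinearMap (Matrix.toEuclideanLin A)‖

noncomputable def toEuc {n m : ℕ} (A : Matrix (Fin n) (Fin m) ℝ) :
    EuclideanSpace ℝ (Fin n × Fin m) := WithLp.toLp 2 (fun p => A p.1 p.2)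

lemma frob_eq {n m : ℕ} (A : Matrix (Fin n) (Fin m) ℝ) : frobNorm A = ‖toEuc A‖ := by
  rw [EuclideanSpace.norm_eq, frobNorm, ← Finset.sum_product']
  congr 1
  exact Finset.sum_congr rfl fun p _ => by simp [toEuc, sq_abs]

lemma frobNorm_nonneg {n m : ℕ} (A : Matrix (Fin n) (Fin m) ℝ) : 0 ≤ frobNorm A :=
  Real.sqrt_nonneg _

lemma frob_sub_le {n m : ℕ} (A B : Matrix (Fin n) (Fin m) ℝ) :
    frobNorm (A - B) ≤ frobNorm A + frobNorm B := by
  rw [frob_eq, frob_eq, frob_eq, show toEuc (A - B) = toEuc A - toEuc B from rfl]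
  exact norm_sub_le _ _

lemma frob_add_le {n m : ℕ} (A B : Matrix (Fin n) (Fin m) ℝ) :
    frobNorm (A + B) ≤ frobNorm A + frobNorm B := by
  rw [frob_eq, frob_eq, frob_eq, show toEuc (A + B) = toEuc A + toEuc B from rfl]
  exact norm_add_le _ _

lemma frob_smul {n m : ℕ} (c : ℝ) (A : Matrix (Fin n) (Fin m) ℝ) :
    frobNorm (c • A) = |c| * frobNorm A := by
  rw [frob_eq, frob_eq, show toEuc (c • A) = c • toEuc A from rfl, norm_smul,
    Real.norm_eq_abs]

lemma euc_norm_sq {n : ℕ} (v : EuclideanSpace ℝ (Fin n)) : ‖v‖ ^ 2 = ∑ i, (v i) ^ 2 := by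
  rw [EuclideanSpace.norm_eq, Real.sq_sqrt (by positivity)]
  exact Finset.sum_congr rfl fun i _ => by rw [Real.norm_eq_abs, sq_abs]

lemma frob_mul_le {n m : ℕ} (M : Matrix (Fin n) (Fin n) ℝ) (A : Matrix (Fin n) (Fin m) ℝ) :
    frobNorm (M * A) ≤ specNorm M * frobNorm A := by
  have h0 : (0:ℝ) ≤ specNorm M := norm_nonneg _
  have key : ∀ j, ∑ i, ((M * A) i j) ^ 2 ≤ specNorm M ^ 2 * ∑ i, (A i j) ^ 2 := by
    intro j
    set va : EuclideanSpace ℝ (Fin n) := WithLp.toLp 2 (fun i => A i j) with hva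
    set vb : EuclideanSpace ℝ (Fin n) := WithLp.toLp 2 (fun i => (M * A) i j) with hvb
    have h2 : ‖vb‖ ≤ specNorm M * ‖va‖ := by
      have h1 : vb = LinearMap.toContinuousLinearMap (Matrix.toEuclideanLin M) va := rfl
      rw [h1, specNorm]
      exact ContinuousLinearMap.le_opNorm _ _
    calc ∑ i, ((M * A) i j) ^ 2 = ‖vb‖ ^ 2 := (euc_norm_sq vb).symm
      _ ≤ (specNorm M * ‖va‖) ^ 2 := pow_le_pow_left₀ (norm_nonneg _) h2 2
      _ = specNorm M ^ 2 * ∑ i, (A i j) ^ 2 := by rw [mul_pow, euc_norm_sq]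
  rw [frobNorm, frobNorm, Finset.sum_comm,
    Finset.sum_comm (f := fun i j => (A i j) ^ 2)]
  calc Real.sqrt (∑ j, ∑ i, ((M * A) i j) ^ 2)
      ≤ Real.sqrt (∑ j, specNorm M ^ 2 * ∑ i, (A i j) ^ 2) :=
        Real.sqrt_le_sqrt (Finset.sum_le_sum fun j _ => key j)
    _ = specNorm M * Real.sqrt (∑ j, ∑ i, (A i j) ^ 2) := by
        rw [← Finset.mul_sum, Real.sqrt_mul (sq_nonneg _), Real.sqrt_sq h0]

lemma pr_norm_le {n m r : ℕ} (Pr : Matrix (Fin n) (Fin m) ℝ → Matrix (Fin n) (Fin m) ℝ)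
    (hPr : ∀ A : Matrix (Fin n) (Fin m) ℝ, (Pr A).rank ≤ r ∧
      ∀ M : Matrix (Fin n) (Fin m) ℝ, M.rank ≤ r →
        frobNorm (A - Pr A) ≤ frobNorm (A - M))
    (A : Matrix (Fin n) (Fin m) ℝ) : frobNorm (Pr A) ≤ frobNorm A := by
  set P := Pr A with hPdef
  by_cases hb : ‖toEuc P‖ = 0
  · rw [frob_eq, hb]; exact frobNorm_nonneg A
  have hbpos : 0 < ‖toEuc P‖ := lt_of_le_of_ne (norm_nonneg _) (Ne.symm hb)
  set a : ℝ := inner ℝ (toEuc A) (toEuc P) with ha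
  set b : ℝ := ‖toEuc P‖ ^ 2 with hbdef
  have hb0 : 0 < b := by positivity
  have hrank : ∀ c : ℝ, (c • P).rank ≤ r := by
    intro c
    have h1 : c • P = (c • (1 : Matrix (Fin n) (Fin n) ℝ)) * P := by
      rw [Matrix.smul_mul, Matrix.one_mul]
    rw [h1]
    exact le_trans (Matrix.rank_mul_le_right _ _) (hPr A).1
  have hopt : ‖toEuc A - toEuc P‖ ≤ ‖toEuc A - (a / b) • toEuc P‖ := by
    have h := (hPr A).2 ((a / b) • P) (hrank _)
    rw [frob_eq, frob_eq] at h
    exact h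
  have h1 : ‖toEuc A - toEuc P‖ ^ 2 ≤ ‖toEuc A - (a / b) • toEuc P‖ ^ 2 :=
    pow_le_pow_left₀ (norm_nonneg _) hopt 2
  rw [norm_sub_sq_real, norm_sub_sq_real, real_inner_smul_right, norm_smul,
    Real.norm_eq_abs, mul_pow, sq_abs, div_pow] at h1
  rw [← ha, ← hbdef] at h1
  have hb' : b ≠ 0 := ne_of_gt hb0
  have e1 : a / b * a = a ^ 2 / b := by rw [div_mul_eq_mul_div, sq]
  have e2 : a ^ 2 / b ^ 2 * b = a ^ 2 / b := by field_simp
  rw [e1, e2] at h1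
  have h2 : (a - b) ^ 2 ≤ 0 := by
    have h5 : b - 2 * a ≤ -(a ^ 2 / b) := by linarith
    have h6 : (b - 2 * a) * b ≤ -(a ^ 2 / b) * b := mul_le_mul_of_nonneg_right h5 hb0.le
    have h7 : a ^ 2 / b * b = a ^ 2 := div_mul_cancel₀ _ hb'
    nlinarith [h6, h7]
  have hab : a = b := by nlinarith [sq_nonneg (a - b)]
  have hcs : a ≤ ‖toEuc A‖ * ‖toEuc P‖ := real_inner_le_norm _ _
  rw [frob_eq, frob_eq]
  nlinarith [hbpos, hcs, hab, norm_nonneg (toEuc A)]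

theorem stmt11 (N n m r : ℕ) (X : Matrix (Fin N) (Fin n) ℝ)
    (W : Matrix (Fin n) (Fin m) ℝ) (l : ℝ) (hl : 0 < l)
    (H R : Matrix (Fin n) (Fin n) ℝ)
    (hHdef : H = Xᵀ * X + l • (1 : Matrix (Fin n) (Fin n) ℝ))
    (hR : R.PosDef) (hRR : R * R = H)
    (ρ : ℕ → ℝ) (hρpos : ∀ t, 0 < ρ t) (hρmono : Monotone ρ)
    -- `Pr` is the Frobenius-optimal rank-`r` projection
    (Pr : Matrix (Fin n) (Fin m) ℝ → Matrix (Fin n) (Fin m) ℝ)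
    (hPr : ∀ A : Matrix (Fin n) (Fin m) ℝ, (Pr A).rank ≤ r ∧
      ∀ M : Matrix (Fin n) (Fin m) ℝ, M.rank ≤ r →
        frobNorm (A - Pr A) ≤ frobNorm (A - M))
    -- `PS` is the (magnitude-based) Frobenius projection onto the sparsity set `𝒮`
    (𝒮 : Set (Matrix (Fin n) (Fin m) ℝ))
    (PS : Matrix (Fin n) (Fin m) ℝ → Matrix (Fin n) (Fin m) ℝ)
    (hPS : ∀ A : Matrix (Fin n) (Fin m) ℝ, PS A ∈ 𝒮 ∧
      ∀ D ∈ 𝒮, frobNorm (A - PS A) ≤ frobNorm (A - D))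
    -- the 3-block ADMM iterates
    (S L D V : ℕ → Matrix (Fin n) (Fin m) ℝ)
    (hS : ∀ t, S (t + 1) =
      (H + ρ t • (1 : Matrix (Fin n) (Fin n) ℝ))⁻¹ * (H * (W - L t) - V t + ρ t • D t))
    (hL : ∀ t, L (t + 1) = R⁻¹ * Pr (R * (W - S (t + 1))))
    (hD : ∀ t, D (t + 1) = PS (S (t + 1) + (ρ t)⁻¹ • V t))
    (hV : ∀ t, V (t + 1) = V t + ρ t • (S (t + 1) - D (t + 1)))
    (CF : ℝ) (hCF : 1 ≤ CF)
    (hCF1 : specNorm R⁻¹ ≤ CF) (hCF2 : specNorm H ≤ CF) (hCF3 : frobNorm (H * W) ≤ CF) :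
    ∀ t ≥ 1, frobNorm (L t) ≤
      CF ^ 3 * (1 + frobNorm (D t) + frobNorm (V t) / ρ (t - 1) +
        frobNorm (V (t - 1)) / ρ (t - 1)) := by
  intro t ht
  obtain ⟨s, rfl⟩ : ∃ s, t = s + 1 := ⟨t - 1, (Nat.succ_pred_eq_of_pos ht).symm⟩
  simp only [Nat.add_sub_cancel]
  have hρ := hρpos s
  have hCF0 : (0:ℝ) ≤ CF := by linarith
  -- R is invertible and R⁻¹ * H = R
  have hRu : IsUnit R.det := (Matrix.isUnit_iff_isUnit_det R).mp hR.isUnit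
  have hRinv : R⁻¹ * H = R := by
    rw [← hRR, ← mul_assoc, Matrix.nonsing_inv_mul R hRu, Matrix.one_mul]
  -- express S in terms of D and V
  have hSrep : S (s + 1) = D (s + 1) + (ρ s)⁻¹ • (V (s + 1) - V s) := by
    have h : ρ s • (S (s + 1) - D (s + 1)) = V (s + 1) - V s := by
      rw [hV s]; abel
    calc S (s + 1) = D (s + 1) + (S (s + 1) - D (s + 1)) := by abel
      _ = D (s + 1) + (ρ s)⁻¹ • (ρ s • (S (s + 1) - D (s + 1))) := by
          rw [inv_smul_smul₀ (ne_of_gt hρ)]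
      _ = _ := by rw [h]
  have hSb : frobNorm (S (s + 1)) ≤
      frobNorm (D (s + 1)) + frobNorm (V (s + 1)) / ρ s + frobNorm (V s) / ρ s := by
    have h1 : frobNorm (S (s + 1)) ≤
        frobNorm (D (s + 1)) + frobNorm ((ρ s)⁻¹ • (V (s + 1) - V s)) := by
      rw [hSrep]; exact frob_add_le _ _
    have h2 : frobNorm ((ρ s)⁻¹ • (V (s + 1) - V s)) =
        (ρ s)⁻¹ * frobNorm (V (s + 1) - V s) := by
      rw [frob_smul, abs_of_pos (by positivity)]
    have h3 := frob_sub_le (V (s + 1)) (V s)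
    have hρinv : (0:ℝ) < (ρ s)⁻¹ := by positivity
    rw [div_eq_inv_mul, div_eq_inv_mul]
    nlinarith [h1, h2, h3, hρinv]
  -- chain of bounds
  have step1 : frobNorm (L (s + 1)) ≤ CF * frobNorm (Pr (R * (W - S (s + 1)))) := by
    rw [hL s]
    exact le_trans (frob_mul_le _ _)
      (mul_le_mul_of_nonneg_right hCF1 (frobNorm_nonneg _))
  have step2 : frobNorm (Pr (R * (W - S (s + 1)))) ≤ frobNorm (R * (W - S (s + 1))) :=
    pr_norm_le Pr hPr _
  have step3 : frobNorm (R * (W - S (s + 1))) ≤ CF * frobNorm (H * (W - S (s + 1))) := by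
    have hWS : R * (W - S (s + 1)) = R⁻¹ * (H * (W - S (s + 1))) := by
      rw [← Matrix.mul_assoc, hRinv]
    rw [hWS]
    exact le_trans (frob_mul_le _ _)
      (mul_le_mul_of_nonneg_right hCF1 (frobNorm_nonneg _))
  have step4 : frobNorm (H * (W - S (s + 1))) ≤ CF + CF * frobNorm (S (s + 1)) := by
    have h : H * (W - S (s + 1)) = H * W - H * S (s + 1) := Matrix.mul_sub _ _ _
    rw [h]
    have h2 := le_trans (frob_mul_le H (S (s + 1)))
      (mul_le_mul_of_nonneg_right hCF2 (frobNorm_nonneg _))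
    have h3 := frob_sub_le (H * W) (H * S (s + 1))
    linarith
  have final : frobNorm (L (s + 1)) ≤ CF ^ 3 * (1 + frobNorm (S (s + 1))) := by
    calc frobNorm (L (s + 1)) ≤ CF * frobNorm (Pr (R * (W - S (s + 1)))) := step1
      _ ≤ CF * frobNorm (R * (W - S (s + 1))) := mul_le_mul_of_nonneg_left step2 hCF0
      _ ≤ CF * (CF * frobNorm (H * (W - S (s + 1)))) :=
          mul_le_mul_of_nonneg_left step3 hCF0
      _ ≤ CF * (CF * (CF + CF * frobNorm (S (s + 1)))) :=
          mul_le_mul_of_nonneg_left (mul_le_mul_of_nonneg_left step4 hCF0) hCF0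
      _ = CF ^ 3 * (1 + frobNorm (S (s + 1))) := by ring
  refine le_trans final (mul_le_mul_of_nonneg_left ?_ (by positivity))
  linarith [hSb]
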